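/- arXiv:1706.08427 — 9 statements merged into one kernel-verified Lean document; each statement's English description precedes it below -/
import Mathlib

section
/- Let f: ℝⁿ → ℝ be convex, differentiable and coordinate-wise L-smooth (L > 0), and let the sequence {x_t} be generated by steepest coordinate descent: x_{t+1} = x_t − (1/L)·∇_{i_t} f(x_t)·e_{i_t} with i_t ∈ argmax_{i∈[n]} |∇_i f(x_t)|. Let x* be a minimizer of f with f* = f(x*), and suppose R₁ > 0 satisfies ‖x − x*‖₁ ≤ R₁ for every x with f(x) ≤ f(x_0). Then for every t ≥ 1, f(x_t) − f* ≤ 2·L·R₁²/t. -/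
open Set


/-- The `i`-th standard unit vector of `ℝⁿ`. -/
def stdBasis (n : ℕ) (i : Fin n) : Fin n → ℝ := Pi.single i 1

lemma scd_aux_hasDerivAt {n : ℕ} (f : (Fin n → ℝ) → ℝ) (hdiff : Differentiable ℝ f)
    (y v : Fin n → ℝ) (s : ℝ) :
    HasDerivAt (fun t : ℝ => f (y + t • v)) (fderiv ℝ f (y + s • v) v) s := by
  have h1 : HasDerivAt (fun t : ℝ => y + t • v) v s := by
    simpa using ((hasDerivAt_id s).smul_const v).const_add y
  exact ((hdiff (y + s • v)).hasFDerivAt.comp_hasDerivAt s h1)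

lemma scd_aux_grad_ineq {n : ℕ} (f : (Fin n → ℝ) → ℝ)
    (hconv : ConvexOn ℝ Set.univ f) (hdiff : Differentiable ℝ f)
    (y z : Fin n → ℝ) :
    f y + fderiv ℝ f y (z - y) ≤ f z := by
  set v := z - y with hv
  have hg : ConvexOn ℝ (Set.univ : Set ℝ) (fun s : ℝ => f (y + s • v)) := by
    refine ⟨convex_univ, fun s _ t _ a b ha hb hab => ?_⟩
    have h := hconv.2 (Set.mem_univ (y + s • v)) (Set.mem_univ (y + t • v)) ha hb hab
    have e : y + (a • s + b • t) • v = a • (y + s • v) + b • (y + t • v) := by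
      have hb' : b = 1 - a := by linarith
      subst hb'
      simp only [smul_eq_mul]
      module
    simpa only [e] using h
  have h0 : HasDerivAt (fun s : ℝ => f (y + s • v)) (fderiv ℝ f y v) 0 := by
    simpa using scd_aux_hasDerivAt f hdiff y v 0
  have := hg.le_slope_of_hasDerivAt (mem_univ (0:ℝ)) (mem_univ (1:ℝ)) one_pos h0
  have hs : slope (fun s : ℝ => f (y + s • v)) 0 1 = f z - f y := by
    simp [slope_def_field, hv]
  rw [hs] at this
  linarith

lemma scd_aux_descent {n : ℕ} (L : ℝ) (f : (Fin n → ℝ) → ℝ)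
    (hdiff : Differentiable ℝ f)
    (hsmooth : ∀ (y : Fin n → ℝ) (i : Fin n) (η : ℝ),
      |fderiv ℝ f (y + η • stdBasis n i) (stdBasis n i) -
        fderiv ℝ f y (stdBasis n i)| ≤ L * |η|)
    (y : Fin n → ℝ) (i : Fin n) (η : ℝ) :
    f (y + η • stdBasis n i) ≤ f y + η * fderiv ℝ f y (stdBasis n i) + L / 2 * η ^ 2 := by
  set e : Fin n → ℝ := stdBasis n i with he
  set d0 : ℝ := fderiv ℝ f y e with hd0
  set ψ : ℝ → ℝ := fun s => f (y + s • e) - s * d0 - L / 2 * s ^ 2 with hψdef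
  have hψ : ∀ s : ℝ, HasDerivAt ψ (fderiv ℝ f (y + s • e) e - d0 - L * s) s := by
    intro s
    have h1 := scd_aux_hasDerivAt f hdiff y e s
    have h2 : HasDerivAt (fun s : ℝ => s * d0) d0 s := by
      simpa using (hasDerivAt_id s).mul_const d0
    have h3 : HasDerivAt (fun s : ℝ => L / 2 * s ^ 2) (L * s) s := by
      have := (hasDerivAt_pow 2 s).const_mul (L / 2)
      exact this.congr_deriv (by ring)
    exact (h1.sub h2).sub h3
  have hψd : ∀ s : ℝ, deriv ψ s = fderiv ℝ f (y + s • e) e - d0 - L * s :=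
    fun s => (hψ s).deriv
  have hψcont : Continuous ψ := by
    have : Differentiable ℝ ψ := fun s => (hψ s).differentiableAt
    exact this.continuous
  have key : ψ η ≤ ψ 0 := by
    rcases le_or_gt 0 η with hη | hη
    · have hanti : AntitoneOn ψ (Icc 0 η) := by
        apply antitoneOn_of_deriv_nonpos (convex_Icc 0 η) hψcont.continuousOn
          (fun s _ => ((hψ s).differentiableAt).differentiableWithinAt)
        intro s hs
        rw [interior_Icc] at hs
        rw [hψd s]
        have := hsmooth y i s
        have habs : |s| = s := abs_of_pos hs.1
        rw [habs] at this
        have h4 : fderiv ℝ f (y + s • e) e - d0 ≤ L * s :=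
          le_trans (le_abs_self _) this
        linarith
      exact hanti (left_mem_Icc.2 hη) (right_mem_Icc.2 hη) hη
    · have hmono : MonotoneOn ψ (Icc η 0) := by
        apply monotoneOn_of_deriv_nonneg (convex_Icc η 0) hψcont.continuousOn
          (fun s _ => ((hψ s).differentiableAt).differentiableWithinAt)
        intro s hs
        rw [interior_Icc] at hs
        rw [hψd s]
        have := hsmooth y i s
        have habs : |s| = -s := abs_of_neg hs.2
        rw [habs] at this
        have h4 : -(L * -s) ≤ fderiv ℝ f (y + s • e) e - d0 := neg_le_of_abs_le this
        linarith
      exact hmono (left_mem_Icc.2 hη.le) (right_mem_Icc.2 hη.le) hη.le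
  have hψη : ψ η = f (y + η • e) - η * d0 - L / 2 * η ^ 2 := rfl
  have hψ0 : ψ 0 = f y := by simp [hψdef]
  rw [hψη, hψ0] at key
  linarith

lemma scd_aux_sum {n : ℕ} (f : (Fin n → ℝ) → ℝ) (y v : Fin n → ℝ) :
    fderiv ℝ f y v = ∑ j, v j * fderiv ℝ f y (stdBasis n j) := by
  have hv : v = ∑ j, v j • stdBasis n j := by
    funext k
    simp [stdBasis, Finset.sum_apply, Pi.single_apply]
  conv_lhs => rw [hv]
  rw [map_sum]
  simp [smul_eq_mul]


/-- Convergence of steepest coordinate descent (SCD) on convex,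
coordinate-wise `L`-smooth functions: `f(x_t) - f* ≤ 2 L R₁² / t`. -/
theorem scd_smooth_convergence {n : ℕ} (L R₁ : ℝ) (hL : 0 < L) (hR₁ : 0 < R₁)
    (f : (Fin n → ℝ) → ℝ)
    (hconv : ConvexOn ℝ Set.univ f)
    (hdiff : Differentiable ℝ f)
    (hsmooth : ∀ (y : Fin n → ℝ) (i : Fin n) (η : ℝ),
      |fderiv ℝ f (y + η • stdBasis n i) (stdBasis n i) -
        fderiv ℝ f y (stdBasis n i)| ≤ L * |η|)
    (x : ℕ → Fin n → ℝ) (idx : ℕ → Fin n)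
    (hsel : ∀ (t : ℕ) (j : Fin n),
      |fderiv ℝ f (x t) (stdBasis n j)| ≤
        |fderiv ℝ f (x t) (stdBasis n (idx t))|)
    (hupd : ∀ t : ℕ, x (t + 1) =
      x t - (fderiv ℝ f (x t) (stdBasis n (idx t)) / L) • stdBasis n (idx t))
    (xstar : Fin n → ℝ) (hmin : ∀ y, f xstar ≤ f y)
    (hlevel : ∀ y : Fin n → ℝ, f y ≤ f (x 0) → ∑ j, |y j - xstar j| ≤ R₁) :
    ∀ t : ℕ, 1 ≤ t → f (x t) - f xstar ≤ 2 * L * R₁ ^ 2 / t := by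
  set C : ℝ := 2 * L * R₁ ^ 2 with hCdef
  have hC : 0 < C := by positivity
  set D : ℕ → ℝ := fun t => fderiv ℝ f (x t) (stdBasis n (idx t)) with hD
  set δ : ℕ → ℝ := fun t => f (x t) - f xstar with hδ
  have hδ0 : ∀ t, 0 ≤ δ t := fun t => sub_nonneg.2 (hmin (x t))
  -- descent step
  have hstep : ∀ t, f (x (t + 1)) ≤ f (x t) - D t ^ 2 / (2 * L) := by
    intro t
    have h := scd_aux_descent L f hdiff hsmooth (x t) (idx t) (-(D t / L))
    have hx1 : x (t + 1) = x t + (-(D t / L)) • stdBasis n (idx t) := by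
      rw [hupd t, sub_eq_add_neg, ← neg_smul]
    rw [← hx1] at h
    have e : f (x t) + -(D t / L) * D t + L / 2 * (-(D t / L)) ^ 2
        = f (x t) - D t ^ 2 / (2 * L) := by
      field_simp
      ring
    rw [e] at h
    exact h
  have hmono : ∀ t, f (x (t + 1)) ≤ f (x t) := by
    intro t
    have h1 : 0 ≤ D t ^ 2 / (2 * L) := by positivity
    linarith [hstep t]
  have hle0 : ∀ t, f (x t) ≤ f (x 0) := by
    intro t
    induction t with
    | zero => exact le_rfl
    | succ m ih => exact le_trans (hmono m) ih
  -- gradient inequality bound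
  have hkey : ∀ t, δ t ≤ |D t| * R₁ := by
    intro t
    have hg := scd_aux_grad_ineq f hconv hdiff (x t) xstar
    have h1 : δ t ≤ fderiv ℝ f (x t) (x t - xstar) := by
      have e : x t - xstar = -(xstar - x t) := by ring
      rw [e, map_neg]
      simp only [hδ]
      linarith
    have h2 : fderiv ℝ f (x t) (x t - xstar)
        = ∑ j, (x t j - xstar j) * fderiv ℝ f (x t) (stdBasis n j) := by
      rw [scd_aux_sum f (x t) (x t - xstar)]
      simp [Pi.sub_apply]
    have h3 : ∑ j, (x t j - xstar j) * fderiv ℝ f (x t) (stdBasis n j)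
        ≤ ∑ j, |x t j - xstar j| * |D t| := by
      apply Finset.sum_le_sum
      intro j _
      calc (x t j - xstar j) * fderiv ℝ f (x t) (stdBasis n j)
          ≤ |(x t j - xstar j) * fderiv ℝ f (x t) (stdBasis n j)| := le_abs_self _
        _ = |x t j - xstar j| * |fderiv ℝ f (x t) (stdBasis n j)| := abs_mul _ _
        _ ≤ |x t j - xstar j| * |D t| :=
            mul_le_mul_of_nonneg_left (hsel t j) (abs_nonneg _)
    have h4 : ∑ j, |x t j - xstar j| * |D t| = (∑ j, |x t j - xstar j|) * |D t| := by
      rw [Finset.sum_mul]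
    have h5 : (∑ j, |x t j - xstar j|) * |D t| ≤ R₁ * |D t| :=
      mul_le_mul_of_nonneg_right (hlevel (x t) (hle0 t)) (abs_nonneg _)
    calc δ t ≤ fderiv ℝ f (x t) (x t - xstar) := h1
      _ ≤ R₁ * |D t| := by rw [h2]; linarith
      _ = |D t| * R₁ := mul_comm _ _
  -- recursion
  have hrec : ∀ t, δ (t + 1) ≤ δ t - δ t ^ 2 / C := by
    intro t
    have h1 : δ t ^ 2 ≤ D t ^ 2 * R₁ ^ 2 := by
      nlinarith [hkey t, hδ0 t, abs_nonneg (D t), sq_abs (D t)]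
    have h2 : δ t ^ 2 / C ≤ D t ^ 2 / (2 * L) := by
      rw [div_le_div_iff₀ hC (by positivity)]
      nlinarith [h1]
    have h3 := hstep t
    simp only [hδ]
    linarith
  -- base case: δ 1 ≤ C / 4
  have hbase : δ 1 ≤ C / 4 := by
    have h1 := hrec 0
    have h2 : δ 0 - δ 0 ^ 2 / C ≤ C / 4 := by
      rw [show δ 0 - δ 0 ^ 2 / C = (δ 0 * C - δ 0 ^ 2) / C by field_simp,
        div_le_div_iff₀ hC (by norm_num : (0:ℝ) < 4)]
      nlinarith [sq_nonneg (C - 2 * δ 0)]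
    linarith
  -- induction: δ (m+1) ≤ C / (m+4)
  have hind : ∀ m : ℕ, δ (m + 1) ≤ C / ((m : ℝ) + 4) := by
    intro m
    induction m with
    | zero => simpa using hbase
    | succ k ih =>
      set K : ℝ := (k : ℝ) + 4 with hK
      have hKpos : 0 < K := by positivity
      have hK4 : 4 ≤ K := by simp [hK]
      have ha0 := hδ0 (k + 1)
      have haK : δ (k + 1) * K ≤ C := by
        rw [← le_div_iff₀ hKpos]; exact ih
      have h1 := hrec (k + 1)
      have h2 : δ (k + 1) - δ (k + 1) ^ 2 / C ≤ C / (K + 1) := by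
        rw [show δ (k + 1) - δ (k + 1) ^ 2 / C
            = (δ (k + 1) * C - δ (k + 1) ^ 2) / C by field_simp,
          div_le_div_iff₀ hC (by positivity : (0:ℝ) < K + 1)]
        nlinarith [mul_nonneg (sub_nonneg.2 haK) ha0, sq_nonneg (C - δ (k + 1) * K),
          mul_nonneg (mul_nonneg (sub_nonneg.2 haK) hC.le) (by linarith : (0:ℝ) ≤ K - 2),
          mul_nonneg (sq_nonneg (C - δ (k + 1) * K)) (by linarith : (0:ℝ) ≤ K + 1)]
      have e : ((k : ℝ) + 1) + 4 = K + 1 := by push_cast [hK]; ring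
      rw [show ((k + 1 : ℕ) : ℝ) = (k : ℝ) + 1 by push_cast; ring, e]
      linarith
  -- conclude
  intro t ht
  obtain ⟨m, rfl⟩ : ∃ m, t = m + 1 := ⟨t - 1, by omega⟩
  have h1 := hind m
  have h2 : C / ((m : ℝ) + 4) ≤ C / ((m + 1 : ℕ) : ℝ) := by
    apply div_le_div_of_nonneg_left hC.le (by positivity)
    push_cast; linarith
  calc f (x (m + 1)) - f xstar = δ (m + 1) := rfl
    _ ≤ C / ((m : ℝ) + 4) := h1
    _ ≤ C / ((m + 1 : ℕ) : ℝ) := h2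
    _ = 2 * L * R₁ ^ 2 / ((m + 1 : ℕ) : ℝ) := by rw [hCdef]
end

section
/- Let f: ℝⁿ → ℝ be convex, differentiable and coordinate-wise L-smooth (L > 0), let x* be a minimizer of f with f* = f(x*), and let x ∈ ℝⁿ satisfy f(x) > f*. Let i ∈ argmax_{j∈[n]} |∇_j f(x)| and set x⁺ = x − (1/L)·∇_i f(x)·e_i. If f(x⁺) > f*, then 1/(f(x⁺) − f*) − 1/(f(x) − f*) ≥ 1/(2·L·‖x − x*‖₁²). -/
open Set

-- descent lemma along a coordinate
theorem descent {n : ℕ} (L : ℝ) (hL : 0 < L) (f : (Fin n → ℝ) → ℝ)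
    (hdiff : Differentiable ℝ f)
    (hsmooth : ∀ (y : Fin n → ℝ) (i : Fin n) (η : ℝ),
      |fderiv ℝ f (y + η • stdBasis n i) (stdBasis n i) -
        fderiv ℝ f y (stdBasis n i)| ≤ L * |η|)
    (y : Fin n → ℝ) (i : Fin n) (η : ℝ) :
    f (y + η • stdBasis n i) ≤ f y + η * fderiv ℝ f y (stdBasis n i) + L * η ^ 2 / 2 := by
  set e := stdBasis n i
  set g := fderiv ℝ f y e with hg
  set h : ℝ → ℝ := fun t => f (y + (t * η) • e) - t * (η * g) - L * η ^ 2 * t ^ 2 / 2 with hh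
  have hc : ∀ t : ℝ, HasDerivAt (fun t : ℝ => y + (t * η) • e) (η • e) t := by
    intro t
    have : HasDerivAt (fun t : ℝ => (t * η) • e) (η • e) t := by
      have h1 : HasDerivAt (fun t : ℝ => t * η) η t := by
        simpa using (hasDerivAt_id t).mul_const η
      simpa using h1.smul_const e
    simpa using this.const_add y
  have hd : ∀ t : ℝ, HasDerivAt h
      (η * fderiv ℝ f (y + (t * η) • e) e - η * g - L * η ^ 2 * t) t := by
    intro t
    have h1 : HasDerivAt (fun t : ℝ => f (y + (t * η) • e))
        (fderiv ℝ f (y + (t * η) • e) (η • e)) t :=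
      (hdiff (y + (t * η) • e)).hasFDerivAt.comp_hasDerivAt t (hc t)
    have h2 : HasDerivAt (fun t : ℝ => t * (η * g)) (η * g) t := by
      simpa using (hasDerivAt_id t).mul_const (η * g)
    have h3 : HasDerivAt (fun t : ℝ => L * η ^ 2 * t ^ 2 / 2) (L * η ^ 2 * t) t := by
      have := ((hasDerivAt_pow 2 t).const_mul (L * η ^ 2)).div_const 2
      exact this.congr_deriv (by norm_num; ring)
    have := (h1.sub h2).sub h3
    simp only [map_smul, smul_eq_mul] at this
    exact this
  have hanti : AntitoneOn h (Icc 0 1) := by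
    apply antitoneOn_of_deriv_nonpos (convex_Icc 0 1)
    · exact Continuous.continuousOn (by
        have : Continuous h := by
          apply Continuous.sub
          apply Continuous.sub
          · exact hdiff.continuous.comp (by continuity)
          · continuity
          · continuity
        exact this)
    · intro t ht
      exact (hd t).differentiableAt.differentiableWithinAt
    · intro t ht
      rw [interior_Icc] at ht
      rw [(hd t).deriv]
      have hb := hsmooth y i (t * η)
      have : η * fderiv ℝ f (y + (t * η) • e) e - η * g ≤ |η| * (L * |t * η|) := by
        have h1 : η * fderiv ℝ f (y + (t * η) • e) e - η * g
            = η * (fderiv ℝ f (y + (t * η) • e) e - g) := by ring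
        rw [h1]
        calc η * (fderiv ℝ f (y + (t * η) • e) e - g)
            ≤ |η * (fderiv ℝ f (y + (t * η) • e) e - g)| := le_abs_self _
          _ = |η| * |fderiv ℝ f (y + (t * η) • e) e - g| := abs_mul _ _
          _ ≤ |η| * (L * |t * η|) := by
              exact mul_le_mul_of_nonneg_left hb (abs_nonneg _)
      have ht0 : 0 ≤ t := le_of_lt ht.1
      have : η * fderiv ℝ f (y + (t * η) • e) e - η * g ≤ L * η ^ 2 * t := by
        refine this.trans (le_of_eq ?_)
        rw [abs_mul, abs_of_nonneg ht0]
        rw [show |η| * (L * (t * |η|)) = L * (|η| * |η|) * t by ring, abs_mul_abs_self, sq]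
      linarith
  have h01 := hanti (by simp : (0:ℝ) ∈ Icc 0 1) (by simp : (1:ℝ) ∈ Icc 0 1) zero_le_one
  simp only [hh, one_mul, zero_mul, zero_smul, add_zero, one_pow] at h01
  simp only [ne_eq, OfNat.ofNat_ne_zero, not_false_eq_true, zero_pow, mul_zero, zero_div,
    sub_zero] at h01
  linarith


theorem grad_ineq {n : ℕ} (f : (Fin n → ℝ) → ℝ)
    (hconv : ConvexOn ℝ Set.univ f) (hdiff : Differentiable ℝ f)
    (x y : Fin n → ℝ) :
    fderiv ℝ f x (y - x) ≤ f y - f x := by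
  set φ : ℝ → ℝ := f ∘ (AffineMap.lineMap x y : ℝ →ᵃ[ℝ] (Fin n → ℝ)) with hφ
  have hφconv : ConvexOn ℝ Set.univ φ := by
    have := hconv.comp_affineMap (AffineMap.lineMap x y : ℝ →ᵃ[ℝ] (Fin n → ℝ))
    exact this.subset (subset_univ _) convex_univ
  have hder : HasDerivAt φ (fderiv ℝ f x (y - x)) 0 := by
    have hc : HasDerivAt (fun t : ℝ => x + t • (y - x)) (y - x) 0 := by
      simpa using ((hasDerivAt_id (0:ℝ)).smul_const (y - x)).const_add x
    have h1 : HasDerivAt (fun t : ℝ => f (x + t • (y - x)))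
        (fderiv ℝ f (x + (0:ℝ) • (y - x)) (y - x)) 0 :=
      (hdiff _).hasFDerivAt.comp_hasDerivAt 0 hc
    simp only [zero_smul, add_zero] at h1
    have hfun : φ = fun t : ℝ => f (x + t • (y - x)) := by
      funext t
      simp only [hφ, Function.comp, AffineMap.lineMap_apply, vsub_eq_sub, vadd_eq_add]
      rw [add_comm]
    rw [hfun]
    exact h1
  have := hφconv.le_slope_of_hasDerivWithinAt_Ioi (mem_univ 0) (mem_univ 1)
    zero_lt_one hder.hasDerivWithinAt
  have hs : slope φ 0 1 = f y - f x := by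
    simp [slope_def_field, hφ, AffineMap.lineMap_apply]
  linarith [this, hs ▸ this]

/-- one-step progress of the steepest coordinate descent step, measured
in inverse distances of function values to the optimum:
`1/(f(x⁺) − f*) − 1/(f(x) − f*) ≥ 1/(2 L ‖x − x*‖₁²)`. -/
theorem scd_one_step_inverse_progress {n : ℕ} (L : ℝ) (hL : 0 < L)
    (f : (Fin n → ℝ) → ℝ)
    (hconv : ConvexOn ℝ Set.univ f)
    (hdiff : Differentiable ℝ f)
    (hsmooth : ∀ (y : Fin n → ℝ) (i : Fin n) (η : ℝ),
      |fderiv ℝ f (y + η • stdBasis n i) (stdBasis n i) -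
        fderiv ℝ f y (stdBasis n i)| ≤ L * |η|)
    (xstar : Fin n → ℝ) (hmin : ∀ y, f xstar ≤ f y)
    (x : Fin n → ℝ) (hx : f xstar < f x)
    (i : Fin n)
    (hi : ∀ j : Fin n, |fderiv ℝ f x (stdBasis n j)| ≤ |fderiv ℝ f x (stdBasis n i)|)
    (xplus : Fin n → ℝ)
    (hxplus : xplus = x - (fderiv ℝ f x (stdBasis n i) / L) • stdBasis n i)
    (hplus : f xstar < f xplus) :
    1 / (f xplus - f xstar) - 1 / (f x - f xstar) ≥
      1 / (2 * L * (∑ j, |x j - xstar j|) ^ 2) := by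
  set g := fderiv ℝ f x (stdBasis n i) with hg
  set S := ∑ j, |x j - xstar j| with hS
  set δ := f x - f xstar with hδ
  set δp := f xplus - f xstar with hδp
  have hδ0 : 0 < δ := by simp [hδ]; linarith
  have hδp0 : 0 < δp := by simp [hδp]; linarith
  -- descent step
  have hdesc : δp ≤ δ - g ^ 2 / (2 * L) := by
    have h := descent L hL f hdiff hsmooth x i (-(g / L))
    have hx' : x + (-(g / L)) • stdBasis n i = xplus := by
      rw [hxplus]; module
    rw [hx'] at h
    have : f xplus ≤ f x - g ^ 2 / (2 * L) := by
      have hL' : L ≠ 0 := ne_of_gt hL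
      calc f xplus ≤ f x + -(g / L) * g + L * (-(g / L)) ^ 2 / 2 := h
        _ = f x - g ^ 2 / (2 * L) := by field_simp; ring
    simp only [hδp, hδ]; linarith
  -- gradient inequality
  have hgrad : δ ≤ S * |g| := by
    have h1 : fderiv ℝ f x (xstar - x) ≤ f xstar - f x :=
      grad_ineq f hconv hdiff x xstar
    have h2 : fderiv ℝ f x (x - xstar) = ∑ j, (x j - xstar j) * fderiv ℝ f x (stdBasis n j) := by
      have hv : (x - xstar) = ∑ j, (x j - xstar j) • stdBasis n j := by
        funext k
        simp [stdBasis, Finset.sum_apply, Pi.single_apply, mul_ite]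
      rw [hv]
      simp [map_sum, map_smul, smul_eq_mul]
    have h3 : fderiv ℝ f x (x - xstar) ≤ S * |g| := by
      rw [h2, hS, Finset.sum_mul]
      apply Finset.sum_le_sum
      intro j _
      calc (x j - xstar j) * fderiv ℝ f x (stdBasis n j)
          ≤ |(x j - xstar j) * fderiv ℝ f x (stdBasis n j)| := le_abs_self _
        _ = |x j - xstar j| * |fderiv ℝ f x (stdBasis n j)| := abs_mul _ _
        _ ≤ |x j - xstar j| * |g| := mul_le_mul_of_nonneg_left (hi j) (abs_nonneg _)
    have h4 : fderiv ℝ f x (x - xstar) = -(fderiv ℝ f x (xstar - x)) := by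
      rw [show x - xstar = -(xstar - x) by abel, map_neg]
    simp only [hδ]
    rw [h4] at h3
    linarith
  have hS0 : 0 < S := by
    by_contra h
    push_neg at h
    have : S * |g| ≤ 0 := mul_nonpos_of_nonpos_of_nonneg h (abs_nonneg _)
    linarith
  have hg2 : δ ^ 2 ≤ S ^ 2 * g ^ 2 := by
    have := mul_self_le_mul_self (le_of_lt hδ0) hgrad
    calc δ ^ 2 = δ * δ := sq δ
      _ ≤ (S * |g|) * (S * |g|) := this
      _ = S ^ 2 * g ^ 2 := by rw [show (S * |g|) * (S * |g|) = S^2 * (|g| * |g|) by ring,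
            abs_mul_abs_self]; ring
  have hpos : (0:ℝ) < 2 * L * S ^ 2 := by positivity
  rw [ge_iff_le, div_sub_div _ _ (ne_of_gt hδp0) (ne_of_gt hδ0), div_le_div_iff₀ hpos
    (mul_pos hδp0 hδ0)]
  have h2L : g ^ 2 ≤ 2 * L * (δ - δp) := by
    have : g ^ 2 / (2 * L) ≤ δ - δp := by linarith
    calc g^2 = (g^2/(2*L)) * (2*L) := by field_simp
      _ ≤ (δ - δp) * (2*L) := mul_le_mul_of_nonneg_right this (by linarith)
      _ = 2 * L * (δ - δp) := by ring
  have hδpδ : δp ≤ δ := by nlinarith [sq_nonneg g]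
  nlinarith [mul_le_mul_of_nonneg_left h2L (le_of_lt (mul_pos hpos hS0)), sq_nonneg S,
    mul_le_mul_of_nonneg_right hδpδ (le_of_lt hδ0), sq_nonneg (δ - δp)]
end

section
/- Let f: ℝⁿ → ℝ be convex, differentiable and coordinate-wise L-smooth (L > 0), let x* be a minimizer of f with f* = f(x*), and let x ∈ ℝⁿ satisfy f(x) > f*. For each i ∈ [n] set x⁺_i = x − (1/L)·∇_i f(x)·e_i, and let E f⁺ := (1/n)·Σ_{i=1}^{n} f(x⁺_i) be the expected function value after one uniformly random coordinate descent step. If E f⁺ > f*, then 1/(E f⁺ − f*) − 1/(f(x) − f*) ≥ 1/(2·n·L·‖x − x*‖₂²). -/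
section aux

variable {n : ℕ} {f : (Fin n → ℝ) → ℝ}

/-- Derivative of `f` along a line. -/
lemma hasDerivAt_line (hdiff : Differentiable ℝ f) (x v : Fin n → ℝ) (t : ℝ) :
    HasDerivAt (fun s : ℝ => f (x + s • v)) (fderiv ℝ f (x + t • v) v) t := by
  have h1 : HasDerivAt (fun s : ℝ => x + s • v) v t := by
    simpa using ((hasDerivAt_id t).smul_const v).const_add x
  exact (hdiff (x + t • v)).hasFDerivAt.comp_hasDerivAt t h1

/-- 1-D descent lemma along a direction with Lipschitz directional derivative. -/
lemma descent_aux {L : ℝ} (hL : 0 < L) (hdiff : Differentiable ℝ f)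
    (e : Fin n → ℝ) (x : Fin n → ℝ)
    (hsm : ∀ η : ℝ, |fderiv ℝ f (x + η • e) e - fderiv ℝ f x e| ≤ L * |η|)
    (t : ℝ) :
    f (x + t • e) ≤ f x + fderiv ℝ f x e * t + L / 2 * t ^ 2 := by
  set g0 := fderiv ℝ f x e with hg0
  set φ : ℝ → ℝ := fun s => f x + g0 * s + L / 2 * s ^ 2 - f (x + s • e) with hφdef
  have hφ : ∀ s : ℝ, HasDerivAt φ (g0 + L * s - fderiv ℝ f (x + s • e) e) s := by
    intro s
    have h1 : HasDerivAt (fun s : ℝ => f x + g0 * s + L / 2 * s ^ 2) (g0 + L * s) s := by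
      have := (((hasDerivAt_id s).const_mul g0).const_add (f x)).add
        ((hasDerivAt_pow 2 s).const_mul (L / 2))
      refine this.congr_deriv ?_
      ring
    exact h1.sub (hasDerivAt_line hdiff x e s)
  have hφ0 : φ 0 = 0 := by simp [hφdef]
  have key : 0 ≤ φ t := by
    rcases le_total 0 t with ht | ht
    · have hmono : MonotoneOn φ (Set.Ici (0:ℝ)) := by
        apply monotoneOn_of_deriv_nonneg (convex_Ici 0)
        · exact fun s _ => ((hφ s).differentiableAt).continuousAt.continuousWithinAt
        · exact fun s _ => ((hφ s).differentiableAt).differentiableWithinAt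
        · intro s hs
          rw [interior_Ici] at hs
          rw [(hφ s).deriv]
          have h2 := hsm s
          rw [abs_of_pos (Set.mem_Ioi.mp hs)] at h2
          have := abs_le.mp h2
          linarith [this.2]
      have := hmono (Set.self_mem_Ici) (Set.mem_Ici.mpr ht) ht
      linarith [hφ0 ▸ this]
    · have hanti : AntitoneOn φ (Set.Iic (0:ℝ)) := by
        apply antitoneOn_of_deriv_nonpos (convex_Iic 0)
        · exact fun s _ => ((hφ s).differentiableAt).continuousAt.continuousWithinAt
        · exact fun s _ => ((hφ s).differentiableAt).differentiableWithinAt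
        · intro s hs
          rw [interior_Iic] at hs
          rw [(hφ s).deriv]
          have h2 := hsm s
          rw [abs_of_neg (Set.mem_Iio.mp hs)] at h2
          have := abs_le.mp h2
          linarith [this.1]
      have := hanti (Set.mem_Iic.mpr ht) (Set.self_mem_Iic) ht
      linarith [hφ0 ▸ this]
  simp only [hφdef] at key
  linarith

end aux

/-- one-step progress of uniform coordinate descent (in expectation),
measured in inverse distances of function values to the optimum:
`1/(E f⁺ − f*) − 1/(f(x) − f*) ≥ 1/(2 n L ‖x − x*‖₂²)`. -/
theorem ucd_one_step_inverse_progress {n : ℕ} (L : ℝ) (hL : 0 < L)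
    (f : (Fin n → ℝ) → ℝ)
    (hconv : ConvexOn ℝ Set.univ f)
    (hdiff : Differentiable ℝ f)
    (hsmooth : ∀ (y : Fin n → ℝ) (i : Fin n) (η : ℝ),
      |fderiv ℝ f (y + η • stdBasis n i) (stdBasis n i) -
        fderiv ℝ f y (stdBasis n i)| ≤ L * |η|)
    (xstar : Fin n → ℝ) (hmin : ∀ y, f xstar ≤ f y)
    (x : Fin n → ℝ) (hx : f xstar < f x)
    (Efplus : ℝ)
    (hEfplus : Efplus =
      (1 / (n : ℝ)) * ∑ i, f (x - (fderiv ℝ f x (stdBasis n i) / L) • stdBasis n i))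
    (hplus : f xstar < Efplus) :
    1 / (Efplus - f xstar) - 1 / (f x - f xstar) ≥
      1 / (2 * n * L * ∑ j, (x j - xstar j) ^ 2) := by
  -- n is positive
  have hn : 0 < n := by
    rcases Nat.eq_zero_or_pos n with h | h
    · subst h
      exact absurd (congrArg f (Subsingleton.elim x xstar)) (by intro hh; rw [hh] at hx; exact lt_irrefl _ hx)
    · exact h
  have hnR : (0:ℝ) < n := Nat.cast_pos.mpr hn
  set g : Fin n → ℝ := fun i => fderiv ℝ f x (stdBasis n i) with hg
  set S : ℝ := ∑ i, g i ^ 2 with hS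
  set R : ℝ := ∑ j, (x j - xstar j) ^ 2 with hR
  set A : ℝ := f x - f xstar with hA
  set B : ℝ := Efplus - f xstar with hB
  have hApos : 0 < A := sub_pos.mpr hx
  have hBpos : 0 < B := sub_pos.mpr hplus
  -- coordinate descent step bound
  have hstep : ∀ i, f (x - (g i / L) • stdBasis n i) ≤ f x - g i ^ 2 / (2 * L) := by
    intro i
    have := descent_aux hL hdiff (stdBasis n i) x (fun η => hsmooth x i η) (-(g i / L))
    have hrw : x + (-(g i / L)) • stdBasis n i = x - (g i / L) • stdBasis n i := by
      rw [neg_smul, sub_eq_add_neg]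
    rw [hrw] at this
    calc f (x - (g i / L) • stdBasis n i)
        ≤ f x + g i * (-(g i / L)) + L / 2 * (-(g i / L)) ^ 2 := this
      _ = f x - g i ^ 2 / (2 * L) := by field_simp; ring
  -- Efplus bound
  have hEbound : Efplus ≤ f x - S / (2 * n * L) := by
    have hsum : (∑ i, f (x - (g i / L) • stdBasis n i)) ≤ ∑ i : Fin n, (f x - g i ^ 2 / (2 * L)) :=
      Finset.sum_le_sum fun i _ => hstep i
    rw [hEfplus]
    have : (∑ i : Fin n, (f x - g i ^ 2 / (2 * L))) = n * f x - S / (2 * L) := by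
      rw [Finset.sum_sub_distrib, Finset.sum_const, Finset.card_univ, Fintype.card_fin,
        nsmul_eq_mul, hS, Finset.sum_div]
    have h2 : (1 / (n:ℝ)) * ∑ i, f (x - (g i / L) • stdBasis n i)
        ≤ (1 / (n:ℝ)) * (n * f x - S / (2 * L)) := by
      apply mul_le_mul_of_nonneg_left (this ▸ hsum) (by positivity)
    calc (1 / (n : ℝ)) * ∑ i, f (x - (fderiv ℝ f x (stdBasis n i) / L) • stdBasis n i)
        ≤ (1 / (n:ℝ)) * (n * f x - S / (2 * L)) := h2
      _ = f x - S / (2 * n * L) := by field_simp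
  -- convexity: A ≤ ∑ i, g i * (x i - xstar i)
  have hconvineq : A ≤ ∑ i, g i * (x i - xstar i) := by
    -- directional derivative inequality
    set v : Fin n → ℝ := xstar - x with hv
    have hψconv : ConvexOn ℝ Set.univ (fun t : ℝ => f (x + t • v)) := by
      have := hconv.comp_affineMap (AffineMap.lineMap x xstar : ℝ →ᵃ[ℝ] (Fin n → ℝ))
      have heq : (f ∘ (AffineMap.lineMap x xstar : ℝ →ᵃ[ℝ] (Fin n → ℝ)))
          = fun t : ℝ => f (x + t • v) := by
        funext t
        simp only [Function.comp_apply, AffineMap.lineMap_apply_module', hv]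
        congr 1
        abel
      rw [heq] at this
      simpa using this
    have hslope := hψconv.le_slope_of_hasDerivAt (Set.mem_univ (0:ℝ)) (Set.mem_univ (1:ℝ))
      one_pos (by simpa using hasDerivAt_line hdiff x v 0)
    have hslope' : fderiv ℝ f x v ≤ f xstar - f x := by
      have h1 : x + v = xstar := by rw [hv]; abel
      simpa [slope_def_field, h1] using hslope
    -- expand fderiv f x v
    have hvsum : (x - xstar : Fin n → ℝ) = ∑ i, (x i - xstar i) • stdBasis n i := by
      funext j
      rw [Finset.sum_apply]
      simp only [stdBasis, Pi.smul_apply, Pi.single_apply, smul_eq_mul]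
      rw [Finset.sum_eq_single j]
      · simp
      · intro i _ hij; simp [Ne.symm hij]
      · simp
    have hlin : fderiv ℝ f x (x - xstar) = ∑ i, (x i - xstar i) * g i := by
      rw [hvsum, map_sum]
      simp [hg]
    have hneg : fderiv ℝ f x v = -fderiv ℝ f x (x - xstar) := by
      rw [hv, show xstar - x = -(x - xstar) by abel, map_neg]
    rw [hneg] at hslope'
    rw [hA]
    have : fderiv ℝ f x (x - xstar) ≥ f x - f xstar := by linarith
    calc f x - f xstar ≤ fderiv ℝ f x (x - xstar) := this
      _ = ∑ i, (x i - xstar i) * g i := hlin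
      _ = ∑ i, g i * (x i - xstar i) := by simp [mul_comm]
  -- Cauchy-Schwarz
  have hCS : A ^ 2 ≤ S * R := by
    have h1 : (∑ i, g i * (x i - xstar i)) ^ 2 ≤ S * R := by
      rw [hS, hR]
      exact Finset.sum_mul_sq_le_sq_mul_sq _ _ _
    have h2 : A ^ 2 ≤ (∑ i, g i * (x i - xstar i)) ^ 2 := by
      apply sq_le_sq'
      · linarith [hApos]
      · exact hconvineq
    linarith
  have hSnonneg : 0 ≤ S := Finset.sum_nonneg fun i _ => sq_nonneg _
  have hRpos : 0 < R := by
    rcases lt_or_ge 0 R with h | h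
    · exact h
    · exfalso
      have hR0 : R = 0 := le_antisymm h (Finset.sum_nonneg fun i _ => sq_nonneg _)
      nlinarith [hCS, hApos]
  -- B ≤ A
  have hBA : B ≤ A := by
    rw [hA, hB]
    have : Efplus ≤ f x := by
      have := hEbound
      nlinarith [div_nonneg hSnonneg (by positivity : (0:ℝ) ≤ 2 * n * L)]
    linarith
  -- key: 2nL(A - B) ≥ S
  have hkey : S ≤ 2 * n * L * (A - B) := by
    have h1 : B ≤ A - S / (2 * n * L) := by rw [hA, hB]; linarith [hEbound]
    have h2 : S / (2 * n * L) ≤ A - B := by linarith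
    calc S = S / (2 * n * L) * (2 * n * L) := by field_simp
      _ ≤ (A - B) * (2 * n * L) := by
          apply mul_le_mul_of_nonneg_right h2 (by positivity)
      _ = 2 * n * L * (A - B) := by ring
  -- final algebra
  have hgoal : 1 / B - 1 / A ≥ 1 / (2 * n * L * R) := by
    rw [ge_iff_le, div_sub_div _ _ (ne_of_gt hBpos) (ne_of_gt hApos),
      div_le_div_iff₀ (by positivity) (by positivity)]
    nlinarith [mul_le_mul_of_nonneg_right hkey (le_of_lt hRpos), hCS, hBA, hBpos, hApos,
      mul_le_mul_of_nonneg_left hBA (le_of_lt hApos)]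
  exact hgoal
end

section
/- Let n > 2, 0 < α < 1/2, and let c ∈ (0,1) satisfy c^{n−1} = ((1 − α)/n)·Σ_{k=0}^{n−1} c^{k}. Consider q(x) = (1/2)·⟨Qx, x⟩ with Q = ((α − 1)/n)·J_n + I_n and the starting point x₀ with [x₀]_i = c^{i−1} for i = 1,…,n. Then steepest coordinate descent with exact coordinate minimization (choosing i_t ∈ argmax_{i∈[n]} |∇_i q(x_t)| and setting x_{t+1} = x_t − (∇_{i_t} q(x_t)/Q_{i_t i_t})·e_{i_t}) cycles through the coordinates: for every t ≥ 1 the active coordinate is i_t = 1 + ((t−1) mod n), the iterate x_t agrees with x_{t−1} in all other coordinates, and [x_t]_{1+((t−1) mod n)} = c^{n}·[x_{t−1}]_{1+((t−1) mod n)}. -/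
/-- The matrix `Q = ((α − 1)/n) J_n + I_n` where `J_n` is the all-ones matrix. -/
noncomputable def Qmat (n : ℕ) (α : ℝ) : Matrix (Fin n) (Fin n) ℝ :=
  ((α - 1) / n) • Matrix.of (fun _ _ => (1 : ℝ)) + 1

private lemma mulVec_Qmat {n : ℕ} (α : ℝ) (v : Fin n → ℝ) (j : Fin n) :
    (Qmat n α).mulVec v j = ((α - 1) / n) * (∑ k, v k) + v j := by
  simp [Qmat, Matrix.mulVec, dotProduct, Matrix.add_apply, Matrix.one_apply,
    add_mul, Finset.sum_add_distrib, Finset.mul_sum, ite_mul, Finset.sum_ite_eq]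

private lemma Qmat_diag {n : ℕ} (α : ℝ) (j : Fin n) : Qmat n α j j = (α - 1)/n + 1 := by
  simp [Qmat, Matrix.one_apply_eq]

/-- with `c` the solution of `c^{n−1} = ((1−α)/n) ∑_{k<n} c^k` and the
starting point `[x₀]_i = c^{i−1}`, steepest coordinate descent with exact coordinate
minimization on `q(x) = ½⟨Qx,x⟩` cycles through the coordinates: the step from `x_t`
to `x_{t+1}` uses the coordinate `t mod n` (1-based: `1 + ((t−1) mod n)` at step `t`),
leaves all other coordinates unchanged, and multiplies the active coordinate
by `c^n`. -/
theorem scd_cycles_through_coordinates {n : ℕ} (hn : 2 < n)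
    (α : ℝ) (hα0 : 0 < α) (hα : α < 1 / 2)
    (c : ℝ) (hc0 : 0 < c) (hc1 : c < 1)
    (hc : c ^ (n - 1) = ((1 - α) / n) * ∑ k ∈ Finset.range n, c ^ k)
    (x : ℕ → Fin n → ℝ) (idx : ℕ → Fin n)
    (hx0 : ∀ j : Fin n, x 0 j = c ^ (j : ℕ))
    (hsel : ∀ (t : ℕ) (j : Fin n),
      |(Qmat n α).mulVec (x t) j| ≤ |(Qmat n α).mulVec (x t) (idx t)|)
    (hupd : ∀ t : ℕ, x (t + 1) =
      x t - ((Qmat n α).mulVec (x t) (idx t) / Qmat n α (idx t) (idx t)) •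
        stdBasis n (idx t)) :
    ∀ t : ℕ,
      idx t = (⟨t % n, Nat.mod_lt t (by omega)⟩ : Fin n) ∧
      (∀ j : Fin n, j ≠ idx t → x (t + 1) j = x t j) ∧
      x (t + 1) (idx t) = c ^ n * x t (idx t) := by
  have hnpos : 0 < n := by omega
  have hn0 : (0:ℝ) < (n:ℝ) := by exact_mod_cast hnpos
  have hn3 : (3:ℝ) ≤ (n:ℝ) := by exact_mod_cast (by omega : 3 ≤ n)
  have hcne : c ≠ 1 := ne_of_lt hc1
  have hcd : c - 1 ≠ 0 := sub_ne_zero.mpr hcne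
  have hc' : c ^ (n-1) = ((1-α)/n) * ((c^n - 1)/(c-1)) := by
    rw [hc, geom_sum_eq hcne]
  have hpow : c ^ n = c ^ (n-1) * c := by
    rw [← pow_succ]; congr 1; omega
  have hS : (∑ k ∈ Finset.range n, c ^ k) * (c - 1) = c ^ n - 1 := geom_sum_mul c n
  -- key algebraic identity
  have hkeyD : (α - 1)/n + c^(n-1) = c^n * ((α - 1)/n + 1) := by
    linear_combination (1 - c) * hc + ((α-1)/n) * hS - hpow
  -- denominator positive
  have hD : (0:ℝ) < (α - 1)/n + 1 := by
    have h1 : -1 < (α-1)/n := by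
      rw [lt_div_iff₀ hn0]; nlinarith
    linarith
  -- the exponent function
  set E : ℕ → ℕ → ℕ := fun t j => j + (t - t % n) + (if j < t % n then n else 0) with hE
  -- step lemma
  have step : ∀ t : ℕ, (∀ j : Fin n, x t j = c ^ E t (j:ℕ)) →
      ((idx t : ℕ) = t % n ∧ (∀ j : Fin n, x (t+1) j = c ^ E (t+1) (j:ℕ)) ∧
        x (t + 1) (idx t) = c ^ n * x t (idx t)) := by
    intro t hinv
    obtain ⟨q, r, hrn, rfl⟩ : ∃ q r, r < n ∧ t = n * q + r :=
      ⟨t / n, t % n, Nat.mod_lt t hnpos, (Nat.div_add_mod t n).symm⟩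
    have hr' : (n * q + r) % n = r := by
      rw [Nat.mul_add_mod, Nat.mod_eq_of_lt hrn]
    have hEt : ∀ j : ℕ, E (n*q+r) j = j + n*q + (if j < r then n else 0) := by
      intro j; simp only [hE, hr']; split_ifs <;> omega
    -- successor exponents
    obtain ⟨hEt1r, hEt1ne⟩ : E (n*q+r+1) r = r + n*q + n ∧
        (∀ j : ℕ, j < n → j ≠ r → E (n*q+r+1) j = E (n*q+r) j) := by
      rcases Nat.lt_or_ge (r+1) n with hcase | hcase
      · have hm1 : (n*q+r+1) % n = r+1 := by
          have h0 : n*q+r+1 = n*q + (r+1) := by omega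
          rw [h0, Nat.mul_add_mod, Nat.mod_eq_of_lt hcase]
        constructor
        · simp only [hE, hm1]; split_ifs <;> omega
        · intro j hj hne; simp only [hE, hm1, hr']; split_ifs <;> omega
      · have hrn1 : r + 1 = n := by omega
        have hm0 : (n*q+r+1) % n = 0 := by
          have h0 : n*q+r+1 = n*(q+1) := by rw [Nat.mul_succ]; omega
          rw [h0, Nat.mul_mod_right]
        constructor
        · simp only [hE, hm0]; split_ifs <;> omega
        · intro j hj hne; simp only [hE, hm0, hr']; split_ifs <;> omega
    have hEr : E (n*q+r) r = r + n*q := by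
      rw [hEt, if_neg (lt_irrefl r)]; omega
    -- sum of coordinates
    have hsum : ∑ k : Fin n, x (n*q+r) k = c ^ (r + n*q) * ((c^n - 1)/(c-1)) := by
      have h1 : ∑ k : Fin n, x (n*q+r) k = ∑ k ∈ Finset.range n, c ^ E (n*q+r) k := by
        rw [← Fin.sum_univ_eq_sum_range (fun k => c ^ E (n*q+r) k) n]
        exact Finset.sum_congr rfl (fun j _ => hinv j)
      rw [h1, ← Finset.sum_range_add_sum_Ico _ (le_of_lt hrn)]
      have h2 : ∑ k ∈ Finset.range r, c ^ E (n*q+r) k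
          = c ^ (n*q + n) * ((c ^ r - 1)/(c-1)) := by
        rw [← geom_sum_eq hcne, Finset.mul_sum]
        refine Finset.sum_congr rfl (fun j hj => ?_)
        rw [Finset.mem_range] at hj
        rw [hEt j, if_pos hj, ← pow_add]
        congr 1; omega
      have h3 : ∑ k ∈ Finset.Ico r n, c ^ E (n*q+r) k
          = c ^ (n*q) * ((c ^ n - c ^ r)/(c-1)) := by
        rw [← geom_sum_Ico hcne (le_of_lt hrn), Finset.mul_sum]
        refine Finset.sum_congr rfl (fun j hj => ?_)
        rw [Finset.mem_Ico] at hj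
        rw [hEt j, if_neg (by omega : ¬ j < r), ← pow_add]
        congr 1; omega
      rw [h2, h3, pow_add c (n*q) n, pow_add c r (n*q)]
      field_simp
      ring
    -- gradient formula
    have hgrad : ∀ j : Fin n, (Qmat n α).mulVec (x (n*q+r)) j
        = c ^ (E (n*q+r) (j:ℕ)) - c ^ (r + n*q) * c ^ (n-1) := by
      intro j
      rw [mulVec_Qmat, hsum, hinv j, hc']
      ring
    have hElt : ∀ j : Fin n, (j:ℕ) ≠ r → r + n*q < E (n*q+r) (j:ℕ) := by
      intro j hj
      have := j.isLt
      rw [hEt]; split_ifs <;> omega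
    have hEle : ∀ j : Fin n, E (n*q+r) (j:ℕ) ≤ (r + n*q) + (n-1) := by
      intro j
      have := j.isLt
      rw [hEt]; split_ifs <;> omega
    have hgnn : ∀ j : Fin n, 0 ≤ (Qmat n α).mulVec (x (n*q+r)) j := by
      intro j
      rw [hgrad j]
      have h8 : c ^ (r + n*q) * c ^ (n-1) ≤ c ^ (E (n*q+r) (j:ℕ)) := by
        rw [← pow_add]
        exact pow_le_pow_of_le_one hc0.le hc1.le (hEle j)
      linarith
    -- selected coordinate
    have hidx : (idx (n*q+r) : ℕ) = r := by
      by_contra h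
      have h1 := hsel (n*q+r) ⟨r, hrn⟩
      rw [abs_of_nonneg (hgnn _), abs_of_nonneg (hgnn _), hgrad, hgrad] at h1
      have hco : ((⟨r, hrn⟩ : Fin n) : ℕ) = r := rfl
      rw [hco, hEr] at h1
      have h2 : c ^ (E (n*q+r) ((idx (n*q+r) : ℕ))) < c ^ (r + n*q) :=
        pow_lt_pow_right_of_lt_one₀ hc0 hc1 (hElt _ h)
      linarith
    -- the update at the active coordinate
    have hmain : x (n*q+r+1) (idx (n*q+r)) = c ^ (r + n*q + n) := by
      rw [hupd]
      simp only [Pi.sub_apply, Pi.smul_apply, smul_eq_mul, stdBasis, Pi.single_eq_same,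
        mul_one]
      rw [hgrad, Qmat_diag, hinv, hidx, hEr]
      rw [pow_add c (r + n*q) n]
      have h9 : (c^(r+n*q) - c^(r+n*q) * c^(n-1)) / ((α-1)/n + 1)
          = c^(r+n*q) - c^(r+n*q) * c^n := by
        rw [div_eq_iff (ne_of_gt hD)]
        linear_combination (-(c^(r+n*q))) * hkeyD
      rw [h9]; ring
    refine ⟨by rw [hr']; exact hidx, fun j => ?_, ?_⟩
    · by_cases hj : (j : ℕ) = r
      · have hj2 : j = idx (n*q+r) := Fin.ext (by rw [hj, hidx])
        rw [hj2, hmain]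
        rw [show ((idx (n*q+r) : ℕ)) = r from hidx, hEt1r]
      · have hj3 : j ≠ idx (n*q+r) := by
          intro hje
          exact hj (by rw [hje, hidx])
        rw [hupd]
        simp only [Pi.sub_apply, Pi.smul_apply, smul_eq_mul, stdBasis,
          Pi.single_eq_of_ne hj3, mul_zero, sub_zero]
        rw [hinv j, hEt1ne (j:ℕ) j.isLt hj]
    · rw [hmain, hinv, hidx, hEr, pow_add]
      ring
  -- the invariant
  have inv : ∀ t : ℕ, ∀ j : Fin n, x t j = c ^ E t (j:ℕ) := by
    intro t
    induction t with
    | zero => intro j; rw [hx0 j]; simp [hE]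
    | succ t ih => exact (step t ih).2.1
  intro t
  obtain ⟨h1, _, h3⟩ := step t (inv t)
  refine ⟨Fin.ext h1, fun j hj => ?_, h3⟩
  rw [hupd t]
  simp [stdBasis, Pi.single_eq_of_ne hj]
end

section
/- Let n > 2 be an integer and 0 < α ≤ 1/2. Then every c ∈ (0,1) satisfying c^{n−1} = ((1 − α)/n)·Σ_{k=0}^{n−1} c^{k} satisfies c ≥ 1 − 3α/n. -/
lemma bern2 (e : ℝ) (he : 0 ≤ e) : ∀ j : ℕ,
    1 + j * e + j * (j - 1) / 2 * e ^ 2 ≤ (1 + e) ^ j := by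
  intro j
  induction j with
  | zero => norm_num
  | succ k ih =>
    have h1 : (0:ℝ) ≤ 1 + e := by linarith
    have hk : (0:ℝ) ≤ (k:ℝ) * ((k:ℝ) - 1) := by
      rcases Nat.eq_zero_or_pos k with h | h
      · simp [h]
      · have : (1:ℝ) ≤ (k:ℝ) := by exact_mod_cast h
        nlinarith
    have step : (1 + (k:ℝ) * e + (k:ℝ) * ((k:ℝ) - 1) / 2 * e ^ 2) * (1 + e) ≤ (1+e)^k * (1+e) :=
      mul_le_mul_of_nonneg_right ih h1
    have h2 : (1:ℝ) + (↑(k+1)) * e + (↑(k+1)) * ((↑(k+1)) - 1) / 2 * e ^ 2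
        ≤ (1 + (k:ℝ) * e + (k:ℝ) * ((k:ℝ) - 1) / 2 * e ^ 2) * (1 + e) := by
      push_cast
      nlinarith [mul_nonneg hk (mul_nonneg (mul_nonneg he he) he)]
    calc (1:ℝ) + (↑(k+1)) * e + (↑(k+1)) * ((↑(k+1)) - 1) / 2 * e ^ 2
        ≤ (1+e)^k * (1+e) := le_trans h2 step
      _ = (1+e)^(k+1) := (pow_succ _ _).symm

lemma sum_bern (e : ℝ) (he : 0 ≤ e) (n : ℕ) :
    (n:ℝ) + n*(n-1)/2 * e + n*(n-1)*(n-2)/6 * e^2 ≤ ∑ j ∈ Finset.range n, (1+e)^j := by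
  induction n with
  | zero => simp
  | succ m ih =>
    rw [Finset.sum_range_succ]
    have hb := bern2 e he m
    have key : (↑(m+1):ℝ) + (↑(m+1))*((↑(m+1))-1)/2 * e + (↑(m+1))*((↑(m+1))-1)*((↑(m+1))-2)/6 * e^2
        = ((m:ℝ) + m*(m-1)/2 * e + m*(m-1)*(m-2)/6 * e^2) + (1 + (m:ℝ) * e + (m:ℝ)*((m:ℝ)-1)/2 * e^2) := by
      push_cast; ring
    rw [key]
    exact add_le_add ih hb

lemma key_contra (N α e : ℝ) (hN : 3 ≤ N) (hα0 : 0 < α) (hα : α ≤ 1/2)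
    (h3 : (1-α)*((N-1)/2*e + (N-1)*(N-2)/6*e^2) ≤ α)
    (hP : 3*α < (N-3*α)*e) : False := by
  have hA : 0 < 1 - α := by linarith
  have hQ : 0 < (N-3*α)*e - 3*α := by linarith
  have hdiff : 0 ≤ N^2 - 3*N - 3*α*(N-5) - 3*α^2*(N^2-6*N+11) := by
    nlinarith [mul_nonneg (by linarith : (0:ℝ) ≤ 1-2*α) (by nlinarith : (0:ℝ) ≤ N^2-3*N),
      mul_nonneg (by linarith : (0:ℝ) ≤ α) (by nlinarith : (0:ℝ) ≤ N^2-3),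
      mul_nonneg (mul_nonneg hα0.le (by linarith : (0:ℝ) ≤ 1/2-α)) (by nlinarith [sq_nonneg (N-3)] : (0:ℝ) ≤ N^2-6*N+11)]
  nlinarith [mul_nonneg (mul_nonneg (mul_nonneg hA.le (by linarith : (0:ℝ) ≤ N-1)) (by linarith : (0:ℝ) ≤ N-2)) (sq_nonneg ((N-3*α)*e - 3*α)),
    mul_pos (mul_pos (mul_pos hA (by linarith : (0:ℝ) < N-1)) (by nlinarith : (0:ℝ) < 3*N + 3*α*(2*N-7))) hQ,
    mul_nonneg (mul_nonneg hα0.le (by norm_num : (0:ℝ) ≤ 3)) hdiff,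
    mul_le_mul_of_nonneg_left h3 (by positivity : (0:ℝ) ≤ 6*(N-3*α)^2)]

/-- every solution `c ∈ (0,1)` of
`c^{n−1} = ((1−α)/n) ∑_{k=0}^{n−1} c^k` satisfies `c ≥ 1 − 3α/n`. -/
theorem c_alpha_lower_bound {n : ℕ} (hn : 2 < n)
    (α : ℝ) (hα0 : 0 < α) (hα : α ≤ 1 / 2)
    (c : ℝ) (hc0 : 0 < c) (hc1 : c < 1)
    (heq : c ^ (n - 1) = ((1 - α) / n) * ∑ k ∈ Finset.range n, c ^ k) :
    1 - 3 * α / n ≤ c := by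
  by_contra hcon
  push_neg at hcon
  have hN : (3:ℝ) ≤ (n:ℝ) := by exact_mod_cast hn
  have hNpos : (0:ℝ) < n := by linarith
  have hc0' : c ≠ 0 := ne_of_gt hc0
  have he0 : (0:ℝ) < 1/c - 1 := by
    have : 1 < 1/c := by rw [lt_div_iff₀ hc0]; linarith
    linarith
  set e : ℝ := 1/c - 1 with hedef
  have hce : c * (1 + e) = 1 := by rw [hedef]; field_simp; ring
  have h1e : (1:ℝ) + e = 1/c := by rw [hedef]; ring
  have hsum : (∑ k ∈ Finset.range n, c ^ k) = c^(n-1) * ∑ j ∈ Finset.range n, (1+e)^j := by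
    rw [Finset.mul_sum]
    rw [← Finset.sum_range_reflect (fun k => c ^ k) n]
    apply Finset.sum_congr rfl
    intro j hj
    rw [Finset.mem_range] at hj
    rw [h1e, div_pow, one_pow, pow_sub₀ c hc0' (by omega : j ≤ n-1)]
    ring
  have hpow : (0:ℝ) < c^(n-1) := pow_pos hc0 _
  have hT : (1-α) * ∑ j ∈ Finset.range n, (1+e)^j = (n:ℝ) := by
    have h1 : c^(n-1) * ((1-α) * ∑ j ∈ Finset.range n, (1+e)^j) = c^(n-1) * (n:ℝ) := by
      have h2 : (n:ℝ) * c^(n-1) = (1-α) * (c^(n-1) * ∑ j ∈ Finset.range n, (1+e)^j) := by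
        rw [← hsum, heq]
        rw [← mul_assoc, mul_div_cancel₀ _ hNpos.ne']
      linarith [h2]
    exact mul_left_cancel₀ hpow.ne' h1
  have hB := sum_bern e he0.le n
  have hA : 0 < 1 - α := by linarith
  have h4 : (1-α) * ((n:ℝ) + n*((n:ℝ)-1)/2 * e + n*((n:ℝ)-1)*((n:ℝ)-2)/6 * e^2) ≤ (n:ℝ) := by
    calc (1-α) * ((n:ℝ) + n*((n:ℝ)-1)/2 * e + n*((n:ℝ)-1)*((n:ℝ)-2)/6 * e^2)
        ≤ (1-α) * ∑ j ∈ Finset.range n, (1+e)^j := mul_le_mul_of_nonneg_left hB hA.le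
      _ = (n:ℝ) := hT
  have h3 : (1-α)*(((n:ℝ)-1)/2*e + ((n:ℝ)-1)*((n:ℝ)-2)/6*e^2) ≤ α := by
    nlinarith [h4, hNpos]
  have hP : 3*α < ((n:ℝ)-3*α)*e := by
    have h1ep : (0:ℝ) < 1 + e := by linarith
    have h5 : c * (1+e) < (1 - 3*α/n) * (1+e) := mul_lt_mul_of_pos_right hcon h1ep
    rw [hce] at h5
    have h6 : (n:ℝ) * 1 < (n:ℝ) * ((1 - 3*α/n) * (1+e)) := mul_lt_mul_of_pos_left h5 hNpos
    have h7 : (n:ℝ) * ((1 - 3*α/n) * (1+e)) = ((n:ℝ) - 3*α) * (1+e) := by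
      field_simp
    rw [h7] at h6
    nlinarith [h6]
  exact key_contra _ α e hN hα0 hα h3 hP
end

section
/- Let n > 2 be an integer, 0 < α ≤ 1/2, and define Ψ(c) = 1 − n·(1 − c)·c^{n−1}/(1 − c^{n}) for c ∈ (0,1). If 1 − 3α/n ∈ (0,1) and 1 − 2α/n ∈ (0,1), then Ψ(1 − 3α/n) ≥ α and Ψ(1 − 2α/n) ≤ α. -/
set_option maxHeartbeats 1000000

/-- The cast product `j(j-1)(j-2)` is nonnegative for natural `j`. -/
lemma cast_prod3_nonneg (j : ℕ) : 0 ≤ (j : ℝ) * ((j : ℝ) - 1) * ((j : ℝ) - 2) := by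
  rcases j with _ | _ | _ | k
  · norm_num
  · norm_num
  · norm_num
  · have hk : (0:ℝ) ≤ (k : ℝ) := Nat.cast_nonneg k
    have h : (0:ℝ) ≤ ((k:ℝ) + 3) * ((k:ℝ) + 2) * ((k:ℝ) + 1) := by positivity
    push_cast
    nlinarith [h]

/-- Cubic lower truncation of `(1+u)^j` for `u ≥ 0`. -/
lemma pow_lb_pos (u : ℝ) (hu : 0 ≤ u) :
    ∀ j : ℕ, 1 + (j : ℝ) * u + (j : ℝ) * ((j : ℝ) - 1) / 2 * u ^ 2
      + (j : ℝ) * ((j : ℝ) - 1) * ((j : ℝ) - 2) / 6 * u ^ 3 ≤ (1 + u) ^ j := by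
  intro j
  induction j with
  | zero => norm_num
  | succ j ih =>
    have h1u : (0:ℝ) ≤ 1 + u := by linarith
    have h2 : (1 + u) * (1 + (j : ℝ) * u + (j : ℝ) * ((j : ℝ) - 1) / 2 * u ^ 2
        + (j : ℝ) * ((j : ℝ) - 1) * ((j : ℝ) - 2) / 6 * u ^ 3) ≤ (1 + u) * (1 + u) ^ j :=
      mul_le_mul_of_nonneg_left ih h1u
    have h3 : (1 + u) * (1 + u) ^ j = (1 + u) ^ (j + 1) := (pow_succ' (1+u) j).symm
    have h4 : 0 ≤ (j : ℝ) * ((j : ℝ) - 1) * ((j : ℝ) - 2) * u ^ 4 :=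
      mul_nonneg (cast_prod3_nonneg j) (pow_nonneg hu 4)
    push_cast
    nlinarith [h2, h3, h4]

/-- Cubic lower truncation of `(1-x)^j` for `0 ≤ x ≤ 1`. -/
lemma pow_lb_neg (x : ℝ) (hx0 : 0 ≤ x) (hx1 : x ≤ 1) :
    ∀ j : ℕ, 1 - (j : ℝ) * x + (j : ℝ) * ((j : ℝ) - 1) / 2 * x ^ 2
      - (j : ℝ) * ((j : ℝ) - 1) * ((j : ℝ) - 2) / 6 * x ^ 3 ≤ (1 - x) ^ j := by
  intro j
  induction j with
  | zero => norm_num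
  | succ j ih =>
    have h1x : (0:ℝ) ≤ 1 - x := by linarith
    have h2 : (1 - x) * (1 - (j : ℝ) * x + (j : ℝ) * ((j : ℝ) - 1) / 2 * x ^ 2
        - (j : ℝ) * ((j : ℝ) - 1) * ((j : ℝ) - 2) / 6 * x ^ 3) ≤ (1 - x) * (1 - x) ^ j :=
      mul_le_mul_of_nonneg_left ih h1x
    have h3 : (1 - x) * (1 - x) ^ j = (1 - x) ^ (j + 1) := (pow_succ' (1-x) j).symm
    have h4 : 0 ≤ (j : ℝ) * ((j : ℝ) - 1) * ((j : ℝ) - 2) * x ^ 4 :=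
      mul_nonneg (cast_prod3_nonneg j) (pow_nonneg hx0 4)
    push_cast
    nlinarith [h2, h3, h4]

/-- Key polynomial inequality for the lower bound at `c = 1 - 3α/n`. -/
lemma keyA_lemma (m α : ℝ) (hm : 3 ≤ m) (hα0 : 0 < α) (hα : α ≤ 1/2)
    (hs : 0 < m - 3 * α) :
    3 * α * (1 + 3 * α / (m - 3 * α)) ≤
      (1 - α) * (m * (3 * α / (m - 3 * α))
        + m * (m - 1) / 2 * (3 * α / (m - 3 * α)) ^ 2
        + m * (m - 1) * (m - 2) / 6 * (3 * α / (m - 3 * α)) ^ 3) := by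
  have hP : 0 ≤ 3 * (1 - α) * (m - 1) * (m * (1 + α) - 5 * α) - 2 * (m - 3 * α) ^ 2 := by
    have h13 : 0 ≤ 1 - 3 * α ^ 2 := by nlinarith
    have h1a : 0 ≤ 1 - α := by linarith
    have hm3 : 0 ≤ m - 3 := by linarith
    nlinarith [mul_nonneg h13 (sq_nonneg (m - 3)), mul_nonneg h1a hm3,
      mul_nonneg hα0.le h1a]
  rw [← sub_nonneg]
  have hm0 : (0:ℝ) < m := by linarith
  have e : (1 - α) * (m * (3 * α / (m - 3 * α))
        + m * (m - 1) / 2 * (3 * α / (m - 3 * α)) ^ 2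
        + m * (m - 1) * (m - 2) / 6 * (3 * α / (m - 3 * α)) ^ 3)
      - 3 * α * (1 + 3 * α / (m - 3 * α))
      = 3 * α ^ 2 * m * (3 * (1 - α) * (m - 1) * (m * (1 + α) - 5 * α)
          - 2 * (m - 3 * α) ^ 2) / (2 * (m - 3 * α) ^ 3) := by
    have hne : m - α * 3 ≠ 0 := by linarith
    field_simp
    ring
  rw [e]
  apply div_nonneg
  · exact mul_nonneg (by positivity) hP
  · positivity

/-- Key polynomial inequality for the upper bound at `c = 1 - 2α/n`. -/
lemma keyB_lemma (m α : ℝ) (hm : 3 ≤ m) (hα0 : 0 < α) (hα : α ≤ 1/2) :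
    (1 - α) * (1 - (1 - m * (2 * α / m) + m * (m - 1) / 2 * (2 * α / m) ^ 2
        - m * (m - 1) * (m - 2) / 6 * (2 * α / m) ^ 3))
      ≤ 2 * α * (1 - (m - 1) * (2 * α / m)
        + (m - 1) * ((m - 1) - 1) / 2 * (2 * α / m) ^ 2
        - (m - 1) * ((m - 1) - 1) * ((m - 1) - 2) / 6 * (2 * α / m) ^ 3) := by
  have hm0 : (0:ℝ) < m := by linarith
  have hR : 0 ≤ 3 * m ^ 2 + α * m * (m - 1) * (m - 8)
      + 2 * α ^ 2 * (m - 1) * (m - 2) * (6 - m) := by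
    rcases le_or_gt m 6 with h6 | h6
    · have t1 : 0 ≤ α ^ 2 * ((m - 1) * (m - 2) * (6 - m)) := by
        apply mul_nonneg (sq_nonneg α)
        have h1 : 0 ≤ m - 1 := by linarith
        have h2 : 0 ≤ m - 2 := by linarith
        exact mul_nonneg (mul_nonneg h1 h2) (by linarith)
      have t2 : 0 ≤ (1 / 2 - α) * (m * (m - 1) * (8 - m)) := by
        apply mul_nonneg (by linarith)
        have h1 : 0 ≤ m - 1 := by linarith
        exact mul_nonneg (mul_nonneg hm0.le h1) (by linarith)
      nlinarith [t1, t2, sq_nonneg (2 * m - 3), hm0]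
    · have t1 : 0 ≤ (α - 2 * α ^ 2) * ((m - 1) * (m - 2) * (m - 6)) := by
        apply mul_nonneg (by nlinarith)
        have h1 : 0 ≤ m - 1 := by linarith
        have h2 : 0 ≤ m - 2 := by linarith
        exact mul_nonneg (mul_nonneg h1 h2) (by linarith)
      have t2 : 0 ≤ (1 / 2 - α) * (m - 1) := by
        apply mul_nonneg (by linarith) (by linarith)
      nlinarith [t1, t2, sq_nonneg (m - 1)]
  rw [← sub_nonneg]
  have e : 2 * α * (1 - (m - 1) * (2 * α / m)
        + (m - 1) * ((m - 1) - 1) / 2 * (2 * α / m) ^ 2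
        - (m - 1) * ((m - 1) - 1) * ((m - 1) - 2) / 6 * (2 * α / m) ^ 3)
      - (1 - α) * (1 - (1 - m * (2 * α / m) + m * (m - 1) / 2 * (2 * α / m) ^ 2
        - m * (m - 1) * (m - 2) / 6 * (2 * α / m) ^ 3))
      = 2 * α ^ 2 * (3 * m ^ 2 + α * m * (m - 1) * (m - 8)
          + 2 * α ^ 2 * (m - 1) * (m - 2) * (6 - m)) / (3 * m ^ 3) := by
    field_simp
    ring
  rw [e]
  apply div_nonneg
  · exact mul_nonneg (by positivity) hR
  · positivity

/-- for `Ψ(c) = 1 − n(1−c)c^{n−1}/(1−c^n)` one has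
`Ψ(1 − 3α/n) ≥ α` and `Ψ(1 − 2α/n) ≤ α`. -/
theorem psi_bounds {n : ℕ} (hn : 2 < n)
    (α : ℝ) (hα0 : 0 < α) (hα : α ≤ 1 / 2)
    (Ψ : ℝ → ℝ)
    (hΨ : ∀ c : ℝ, Ψ c = 1 - n * (1 - c) * c ^ (n - 1) / (1 - c ^ n))
    (h3 : 1 - 3 * α / n ∈ Set.Ioo (0 : ℝ) 1)
    (h2 : 1 - 2 * α / n ∈ Set.Ioo (0 : ℝ) 1) :
    α ≤ Ψ (1 - 3 * α / n) ∧ Ψ (1 - 2 * α / n) ≤ α := by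
  obtain ⟨h3l, h3u⟩ := h3
  obtain ⟨h2l, h2u⟩ := h2
  have hm : (3:ℝ) ≤ (n:ℝ) := by exact_mod_cast (by omega : 3 ≤ n)
  have hm0 : (0:ℝ) < (n:ℝ) := by linarith
  have hn1 : 1 ≤ n := by omega
  have hcast : ((n - 1 : ℕ) : ℝ) = (n:ℝ) - 1 := by
    push_cast [Nat.cast_sub hn1]; ring
  constructor
  · -- Part A : α ≤ Ψ (1 - 3α/n)
    rw [hΨ]
    obtain ⟨c, hcdef⟩ : ∃ c : ℝ, c = 1 - 3 * α / (n:ℝ) := ⟨_, rfl⟩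
    rw [← hcdef] at h3l h3u ⊢
    have hc0 : 0 < c := h3l
    have hc1 : c < 1 := h3u
    have hcn : c ^ n < 1 := pow_lt_one₀ hc0.le hc1 (by omega)
    have hden : 0 < 1 - c ^ n := by linarith
    have hs : 0 < (n:ℝ) - 3 * α := by
      have h1 : 3 * α / (n:ℝ) < 1 := by rw [hcdef] at hc0; linarith
      rw [div_lt_one hm0] at h1; linarith
    obtain ⟨u, hudef⟩ : ∃ u : ℝ, u = 3 * α / ((n:ℝ) - 3 * α) := ⟨_, rfl⟩
    have hu0 : 0 ≤ u := by rw [hudef]; positivity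
    have hcu : c * (1 + u) = 1 := by
      rw [hcdef, hudef]
      field_simp
      ring
    have keyA := keyA_lemma (n:ℝ) α hm hα0 hα hs
    rw [← hudef] at keyA
    have L1 := pow_lb_pos u hu0 n
    have hcn0 : (0:ℝ) ≤ c ^ n := pow_nonneg hc0.le n
    have hpow1 : c ^ n * (1 + u) ^ n = 1 := by rw [← mul_pow, hcu, one_pow]
    have step1 : c ^ n * ((n:ℝ) * u + (n:ℝ) * ((n:ℝ) - 1) / 2 * u ^ 2
        + (n:ℝ) * ((n:ℝ) - 1) * ((n:ℝ) - 2) / 6 * u ^ 3) ≤ 1 - c ^ n := by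
      have h := mul_le_mul_of_nonneg_left L1 hcn0
      nlinarith [h, hpow1]
    have hcn1c : c ^ (n - 1) = c ^ n * (1 + u) := by
      have hps : c ^ n = c ^ (n - 1) * c := by
        conv_lhs => rw [show n = (n - 1) + 1 by omega]
        rw [pow_succ]
      calc c ^ (n - 1) = c ^ (n - 1) * (c * (1 + u)) := by rw [hcu]; ring
        _ = (c ^ (n - 1) * c) * (1 + u) := by ring
        _ = c ^ n * (1 + u) := by rw [← hps]
    have key : ((n:ℝ) * (1 - c)) * c ^ (n - 1) ≤ (1 - α) * (1 - c ^ n) := by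
      have h1c : (n:ℝ) * (1 - c) = 3 * α := by
        rw [hcdef]; field_simp; ring
      rw [h1c, hcn1c]
      calc 3 * α * (c ^ n * (1 + u)) = (3 * α * (1 + u)) * c ^ n := by ring
        _ ≤ ((1 - α) * ((n:ℝ) * u + (n:ℝ) * ((n:ℝ) - 1) / 2 * u ^ 2
            + (n:ℝ) * ((n:ℝ) - 1) * ((n:ℝ) - 2) / 6 * u ^ 3)) * c ^ n :=
          mul_le_mul_of_nonneg_right keyA hcn0
        _ = (1 - α) * (c ^ n * ((n:ℝ) * u + (n:ℝ) * ((n:ℝ) - 1) / 2 * u ^ 2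
            + (n:ℝ) * ((n:ℝ) - 1) * ((n:ℝ) - 2) / 6 * u ^ 3)) := by ring
        _ ≤ (1 - α) * (1 - c ^ n) :=
          mul_le_mul_of_nonneg_left step1 (by linarith)
    have hdiv : (n:ℝ) * (1 - c) * c ^ (n - 1) / (1 - c ^ n) ≤ 1 - α := by
      rw [div_le_iff₀ hden]; linarith [key]
    linarith [hdiv]
  · -- Part B : Ψ (1 - 2α/n) ≤ α
    rw [hΨ]
    obtain ⟨c, hcdef⟩ : ∃ c : ℝ, c = 1 - 2 * α / (n:ℝ) := ⟨_, rfl⟩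
    rw [← hcdef] at h2l h2u ⊢
    have hc0 : 0 < c := h2l
    have hc1 : c < 1 := h2u
    have hcn : c ^ n < 1 := pow_lt_one₀ hc0.le hc1 (by omega)
    have hden : 0 < 1 - c ^ n := by linarith
    obtain ⟨x, hxdef⟩ : ∃ x : ℝ, x = 2 * α / (n:ℝ) := ⟨_, rfl⟩
    have hx0 : 0 ≤ x := by rw [hxdef]; positivity
    have hcx : c = 1 - x := by rw [hcdef, hxdef]
    have hx1 : x ≤ 1 := by
      rw [hcx] at hc0; linarith
    have keyB := keyB_lemma (n:ℝ) α hm hα0 hα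
    rw [← hxdef] at keyB
    have Ln : 1 - (n:ℝ) * x + (n:ℝ) * ((n:ℝ) - 1) / 2 * x ^ 2
        - (n:ℝ) * ((n:ℝ) - 1) * ((n:ℝ) - 2) / 6 * x ^ 3 ≤ c ^ n := by
      have h := pow_lb_neg x hx0 hx1 n
      rw [← hcx] at h
      exact h
    have Ln1 : 1 - ((n:ℝ) - 1) * x + ((n:ℝ) - 1) * (((n:ℝ) - 1) - 1) / 2 * x ^ 2
        - ((n:ℝ) - 1) * (((n:ℝ) - 1) - 1) * (((n:ℝ) - 1) - 2) / 6 * x ^ 3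
        ≤ c ^ (n - 1) := by
      have h := pow_lb_neg x hx0 hx1 (n - 1)
      rw [hcast, ← hcx] at h
      exact h
    have key : (1 - α) * (1 - c ^ n) ≤ ((n:ℝ) * (1 - c)) * c ^ (n - 1) := by
      have h1c : (n:ℝ) * (1 - c) = 2 * α := by
        rw [hcdef]; field_simp; ring
      rw [h1c]
      have B1 : (1 - α) * (1 - c ^ n) ≤ (1 - α) * (1 - (1 - (n:ℝ) * x
          + (n:ℝ) * ((n:ℝ) - 1) / 2 * x ^ 2
          - (n:ℝ) * ((n:ℝ) - 1) * ((n:ℝ) - 2) / 6 * x ^ 3)) :=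
        mul_le_mul_of_nonneg_left (by linarith [Ln]) (by linarith)
      have B2 : 2 * α * (1 - ((n:ℝ) - 1) * x + ((n:ℝ) - 1) * (((n:ℝ) - 1) - 1) / 2 * x ^ 2
          - ((n:ℝ) - 1) * (((n:ℝ) - 1) - 1) * (((n:ℝ) - 1) - 2) / 6 * x ^ 3)
          ≤ 2 * α * c ^ (n - 1) :=
        mul_le_mul_of_nonneg_left Ln1 (by linarith)
      linarith [B1, keyB, B2]
    have hdiv : 1 - α ≤ (n:ℝ) * (1 - c) * c ^ (n - 1) / (1 - c ^ n) := by
      rw [le_div_iff₀ hden]; linarith [key]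
    linarith [hdiv]
end

section
/- Let L > 0, x ∈ ℝ, let Ψ: ℝ → ℝ be convex and continuous, and define V(y, s) = s·y + (L/2)·y² + Ψ(x + y). Let ℓ ≤ g ≤ u be real numbers, let u* be a minimizer of y ↦ V(y, u) and ℓ* a minimizer of y ↦ V(y, ℓ), and set ω_u = V(u*, u) + max{0, u*·(ℓ − u)} and ω_ℓ = V(ℓ*, ℓ) + max{0, ℓ*·(u − ℓ)}. Then inf_{y∈ℝ} V(y, g) ≤ min{ ω_u, ω_ℓ, Ψ(x) }. -/
/-- upper bounds on the minimum of the coordinate-wise model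
`V(y,s) = s y + (L/2) y² + Ψ(x+y)` at the unknown value `s = g ∈ [ℓ,u]`:
`inf_y V(y,g) ≤ min{ω_u, ω_ℓ, Ψ(x)}` with
`ω_u = V(u*,u) + max{0, u*(ℓ−u)}` and `ω_ℓ = V(ℓ*,ℓ) + max{0, ℓ*(u−ℓ)}`. -/
theorem model_min_upper_bound (L x : ℝ) (hL : 0 < L)
    (Ψ : ℝ → ℝ) (hΨconv : ConvexOn ℝ Set.univ Ψ) (hΨcont : Continuous Ψ)
    (V : ℝ → ℝ → ℝ)
    (hV : ∀ y s : ℝ, V y s = s * y + L / 2 * y ^ 2 + Ψ (x + y))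
    (l g u : ℝ) (hlg : l ≤ g) (hgu : g ≤ u)
    (ustar lstar : ℝ)
    (hustar : ∀ y : ℝ, V ustar u ≤ V y u)
    (hlstar : ∀ y : ℝ, V lstar l ≤ V y l) :
    (⨅ y : ℝ, V y g) ≤
      min (min (V ustar u + max 0 (ustar * (l - u)))
        (V lstar l + max 0 (lstar * (u - l)))) (Ψ x) := by
  have hbdd : BddBelow (Set.range fun y => V y g) := by
    refine ⟨min (V ustar u) (V lstar l), ?_⟩
    rintro _ ⟨y, rfl⟩
    rcases le_total y 0 with hy | hy
    · refine le_trans (min_le_left _ _) ?_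
      have h1 := hustar y
      have h2 : V y g = V y u + (g - u) * y := by rw [hV, hV]; ring
      nlinarith [mul_nonneg (sub_nonneg.mpr hgu) (neg_nonneg.mpr hy)]
    · refine le_trans (min_le_right _ _) ?_
      have h1 := hlstar y
      have h2 : V y g = V y l + (g - l) * y := by rw [hV, hV]; ring
      nlinarith [mul_nonneg (sub_nonneg.mpr hlg) hy]
  refine le_min (le_min ?_ ?_) ?_
  · refine le_trans (ciInf_le hbdd ustar) ?_
    have h2 : V ustar g = V ustar u + (g - u) * ustar := by rw [hV, hV]; ring
    rcases le_total 0 ustar with h | h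
    · have : (g - u) * ustar ≤ 0 := mul_nonpos_of_nonpos_of_nonneg (by linarith) h
      calc V ustar g ≤ V ustar u + 0 := by linarith
        _ ≤ _ := by simp [le_max_left]
    · have : (g - u) * ustar ≤ ustar * (l - u) := by nlinarith
      calc V ustar g ≤ V ustar u + ustar * (l - u) := by linarith
        _ ≤ _ := by gcongr; exact le_max_right _ _
  · refine le_trans (ciInf_le hbdd lstar) ?_
    have h2 : V lstar g = V lstar l + (g - l) * lstar := by rw [hV, hV]; ring
    rcases le_total lstar 0 with h | h
    · have : (g - l) * lstar ≤ 0 := mul_nonpos_of_nonneg_of_nonpos (by linarith) h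
      calc V lstar g ≤ V lstar l + 0 := by linarith
        _ ≤ _ := by simp [le_max_left]
    · have : (g - l) * lstar ≤ lstar * (u - l) := by nlinarith
      calc V lstar g ≤ V lstar l + lstar * (u - l) := by linarith
        _ ≤ _ := by gcongr; exact le_max_right _ _
  · refine le_trans (ciInf_le hbdd 0) ?_
    rw [hV]; simp
end

section
/- Let m, v, w ∈ ℝⁿ satisfy v_i ≤ m_i ≤ w_i for all i ∈ [n], and let I ⊆ [n] be nonempty such that v_j > (1/|I|)·Σ_{i∈I} w_i for all j ∉ I. Then (1/|I|)·Σ_{i∈I} m_i ≤ (1/n)·Σ_{i=1}^{n} m_i. Consequently, in ASCD for the GS-q rule, where m_i = min_{y∈ℝ} V_i(x, y, ∇_i f(x)) and v, w are the computed lower and upper bounds on these model minima, choosing the active coordinate uniformly from I yields expected model progress at least that of choosing uniformly from [n]. -/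
/-- safe active-set selection for the GS-q rule.  If
`v_i ≤ m_i ≤ w_i` and every `j ∉ I` satisfies `v_j > (1/|I|) ∑_{i∈I} w_i`, then the
average of `m` over the active set `I` is at most its average over all of `[n]`
(so uniform sampling from `I` yields expected model progress at least that of
uniform sampling from `[n]`). -/
theorem gsq_active_set_average_bound {n : ℕ} (hn : 0 < n)
    (m v w : Fin n → ℝ)
    (hvm : ∀ i, v i ≤ m i) (hmw : ∀ i, m i ≤ w i)
    (I : Finset (Fin n)) (hIne : I.Nonempty)
    (hI : ∀ j ∉ I, (1 / (I.card : ℝ)) * ∑ i ∈ I, w i < v j) :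
    (1 / (I.card : ℝ)) * ∑ i ∈ I, m i ≤ (1 / (n : ℝ)) * ∑ i, m i := by
  set k := I.card with hk
  have hkpos : (0:ℝ) < (k:ℝ) := by exact_mod_cast Finset.card_pos.mpr hIne
  set a : ℝ := (1 / (k:ℝ)) * ∑ i ∈ I, m i with ha
  -- each j ∉ I satisfies a ≤ m j
  have hout : ∀ j ∈ Finset.univ \ I, a ≤ m j := by
    intro j hj
    rw [Finset.mem_sdiff] at hj
    have h1 : a ≤ (1 / (k:ℝ)) * ∑ i ∈ I, w i := by
      apply mul_le_mul_of_nonneg_left (Finset.sum_le_sum fun i _ => hmw i)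
      positivity
    exact le_trans h1 (le_trans (hI j hj.2).le (hvm j))
  have hsum : ((Finset.univ \ I).card : ℝ) * a ≤ ∑ j ∈ Finset.univ \ I, m j := by
    have := Finset.card_nsmul_le_sum (Finset.univ \ I) m a hout
    simpa [nsmul_eq_mul] using this
  have hcard : ((Finset.univ \ I).card : ℝ) = (n:ℝ) - (k:ℝ) := by
    rw [Finset.card_sdiff_of_subset (Finset.subset_univ I)]
    have : I.card ≤ (Finset.univ : Finset (Fin n)).card := Finset.card_le_card (Finset.subset_univ I)
    rw [Nat.cast_sub (by simpa using this)]
    simp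
    exact hk.symm
  have hIsum : ∑ i ∈ I, m i = (k:ℝ) * a := by
    rw [ha]; field_simp
  have htotal : (n:ℝ) * a ≤ ∑ i, m i := by
    have hsplit : ∑ i, m i = (∑ j ∈ Finset.univ \ I, m j) + ∑ i ∈ I, m i :=
      (Finset.sum_sdiff (Finset.subset_univ I)).symm
    rw [hsplit, hIsum]
    rw [hcard] at hsum
    linarith
  have hnpos : (0:ℝ) < (n:ℝ) := by exact_mod_cast hn
  rw [show (1/(n:ℝ)) * ∑ i, m i = (∑ i, m i)/(n:ℝ) from by ring, le_div_iff₀ hnpos]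
  calc (1 / (k:ℝ) * ∑ i ∈ I, m i) * n = (n:ℝ) * a := by rw [ha]; ring
    _ ≤ ∑ i, m i := htotal
end

section
/- Let n, s, c, T be positive real numbers with n > s, and let α ∈ [0, 1] satisfy the equilibrium equation (1 − α)·(n − s)/T = α·(n − s)/(α·(n − s) + c·s). Define ρ = c·s/(α·(n − s) + c·s) and θ = n² + (c − 1)²·s² + 2n·((c − 1)·s − T) + 2·(1 + c)·s·T + T². Then θ ≥ 0, α = (n − (1 + c)·s − T + √θ)/(2·(n − s)), and ρ = 2·c·s/(c·s + n − s − T + √θ). -/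
/-- steady-state competitive ratio computation.  If `α ∈ [0,1]`
solves the equilibrium equation `(1−α)(n−s)/T = α(n−s)/(α(n−s)+cs)`, then with
`θ = n² + (c−1)²s² + 2n((c−1)s − T) + 2(1+c)sT + T²` one has `θ ≥ 0`,
`α = (n − (1+c)s − T + √θ)/(2(n−s))`, and the competitive ratio
`ρ = cs/(α(n−s)+cs)` equals `2cs/(cs + n − s − T + √θ)`. -/
theorem competitive_ratio_steady_state
    (n s c T α : ℝ) (hn : 0 < n) (hs : 0 < s) (hc : 0 < c) (hT : 0 < T)
    (hns : s < n) (hα0 : 0 ≤ α) (hα1 : α ≤ 1)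
    (heq : (1 - α) * (n - s) / T = α * (n - s) / (α * (n - s) + c * s))
    (θ : ℝ)
    (hθ : θ = n ^ 2 + (c - 1) ^ 2 * s ^ 2 + 2 * n * ((c - 1) * s - T) +
      2 * (1 + c) * s * T + T ^ 2)
    (ρ : ℝ) (hρ : ρ = c * s / (α * (n - s) + c * s)) :
    0 ≤ θ ∧
    α = (n - (1 + c) * s - T + Real.sqrt θ) / (2 * (n - s)) ∧
    ρ = 2 * c * s / (c * s + n - s - T + Real.sqrt θ) := by
  have hA : 0 < n - s := by linarith
  have hcs : 0 < c * s := mul_pos hc hs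
  have hden : 0 < α * (n - s) + c * s := by
    have := mul_nonneg hα0 hA.le
    linarith
  have h1 : (1 - α) * (n - s) * (α * (n - s) + c * s) = α * (n - s) * T :=
    (div_eq_div_iff hT.ne' hden.ne').mp heq
  have h2 : (n - s) * ((n - s) * α ^ 2 + (c * s + T - (n - s)) * α - c * s) = 0 := by
    linear_combination -h1
  have quad : (n - s) * α ^ 2 + (c * s + T - (n - s)) * α - c * s = 0 := by
    rcases mul_eq_zero.mp h2 with h | h
    · exact absurd h hA.ne'
    · exact h
  have hθ2 : θ = ((n - s) - c * s - T) ^ 2 + 4 * (c * s) * (n - s) := by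
    rw [hθ]; ring
  have hθ0 : 0 ≤ θ := by rw [hθ2]; positivity
  set r := Real.sqrt θ with hrdef
  have hr0 : 0 ≤ r := Real.sqrt_nonneg θ
  have hr2 : r ^ 2 = θ := Real.sq_sqrt hθ0
  have hrB : (n - s) - c * s - T < r := by nlinarith [hr2, hθ2, mul_pos hcs hA]
  have hsq : (2 * (n - s) * α - ((n - s) - c * s - T)) ^ 2 = r ^ 2 := by
    rw [hr2, hθ2]; linear_combination (4 * (n - s)) * quad
  have hfac : (2 * (n - s) * α - ((n - s) - c * s - T) - r) *
      (2 * (n - s) * α - ((n - s) - c * s - T) + r) = 0 := by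
    linear_combination hsq
  have key : 2 * (n - s) * α - ((n - s) - c * s - T) = r := by
    rcases mul_eq_zero.mp hfac with h | h
    · linarith
    · exfalso
      have h3 : 0 ≤ 2 * (n - s) * α := by positivity
      linarith
  refine ⟨hθ0, ?_, ?_⟩
  · rw [eq_div_iff (by positivity : (2 * (n - s)) ≠ 0)]
    linear_combination key
  · have hd : c * s + n - s - T + r = 2 * (α * (n - s) + c * s) := by
      linear_combination -key
    have hdpos : 0 < c * s + n - s - T + r := by rw [hd]; linarith
    rw [hρ, div_eq_div_iff hden.ne' hdpos.ne']
    linear_combination (c * s) * hd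
end
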